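/- If {a_s + n_s ℤ : s = 1,…,k} is a partition of ℤ into k > 1 residue classes with moduli 1 < n_1 ≤ n_2 ≤ ⋯ ≤ n_k, then n_{k-1} = n_k; i.e., the largest modulus occurs at least twice. -/

import Mathlib

open Finset Complex

lemma aux_filter_eq_image (N d : ℕ) (hd : 0 < d) (hdN : d ∣ N) (a : ℤ) :
    (Finset.range N).filter (fun x : ℕ => (d:ℤ) ∣ (x:ℤ) - a) =
    (Finset.range (N/d)).image (fun j => (a % d).toNat + j * d) := by
  have hd' : (d:ℤ) ≠ 0 := by exact_mod_cast hd.ne'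
  have h0 : 0 ≤ a % (d:ℤ) := Int.emod_nonneg a hd'
  have hrd : a % (d:ℤ) < d := Int.emod_lt_of_pos a (by exact_mod_cast hd)
  have hr : (((a % (d:ℤ)).toNat : ℤ)) = a % d := Int.toNat_of_nonneg h0
  have hq : (d:ℤ) * (a / d) + a % d = a := Int.mul_ediv_add_emod a d
  ext x
  simp only [mem_filter, mem_image, mem_range]
  constructor
  · rintro ⟨hxN, c, hc⟩
    have hx0 : (0:ℤ) ≤ (x:ℤ) := Int.natCast_nonneg x
    have key : (x:ℤ) = (a % d) + (c + a / d) * d := by linarith [hc]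
    have hnn : 0 ≤ c + a / (d:ℤ) := by
      by_contra hcon
      push_neg at hcon
      have h1 : c + a / (d:ℤ) ≤ -1 := by omega
      nlinarith
    refine ⟨(c + a / d).toNat, ?_, ?_⟩
    · rw [Nat.lt_div_iff_mul_lt' hdN]
      have : (d * (c + a / d).toNat : ℤ) < N := by
        rw [Int.toNat_of_nonneg hnn]
        have : ((x:ℤ)) < N := by exact_mod_cast hxN
        linarith
      exact_mod_cast this
    · have : (((a % (d:ℤ)).toNat : ℤ) + (c + a/d).toNat * d) = x := by
        rw [hr, Int.toNat_of_nonneg hnn]; linarith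
      exact_mod_cast this
  · rintro ⟨j, hj, rfl⟩
    have h1 : (j+1) * d ≤ N := by
      calc (j+1) * d ≤ (N/d) * d := Nat.mul_le_mul_right d hj
      _ = N := Nat.div_mul_cancel hdN
    have h2 : (a % (d:ℤ)).toNat < d := by omega
    have h1' : j * d + d ≤ N := by rw [add_mul, one_mul] at h1; exact h1
    constructor
    · omega
    · refine ⟨(j:ℤ) - a / d, ?_⟩
      push_cast [hr]
      linarith

theorem stmt_0 (k : ℕ) (hk : 1 < k) (a : Fin k → ℤ) (n : Fin k → ℕ)
    (hmono : Monotone n) (h1 : ∀ s, 1 < n s)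
    (hcover : ∀ x : ℤ, ∃! s : Fin k, (n s : ℤ) ∣ x - a s) :
    n ⟨k - 2, by omega⟩ = n ⟨k - 1, by omega⟩ := by
  by_contra hne
  set L : Fin k := ⟨k - 1, by omega⟩ with hL
  have hsmall : ∀ s : Fin k, s ≠ L → n s < n L := by
    intro s hs
    have hv : s.val ≠ k - 1 := fun h => hs (Fin.ext h)
    have hs2 : s ≤ (⟨k - 2, by omega⟩ : Fin k) := by
      rw [Fin.le_def]; simp; omega
    have h2 : n (⟨k - 2, by omega⟩ : Fin k) < n L :=
      lt_of_le_of_ne (hmono (by rw [Fin.le_def]; show k - 2 ≤ k - 1; omega)) hne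
    exact lt_of_le_of_lt (hmono hs2) h2
  set m : ℕ := n L with hm
  have hm1 : 1 < m := h1 L
  set N : ℕ := ∏ s, n s with hN
  have hdvd : ∀ s : Fin k, n s ∣ N := fun s => Finset.dvd_prod_of_mem n (mem_univ s)
  have hN0 : 0 < N := Finset.prod_pos (fun s _ => by have := h1 s; omega)
  set ζ : ℂ := Complex.exp (2 * Real.pi * I / m) with hζdef
  have hζ : IsPrimitiveRoot ζ m := Complex.isPrimitiveRoot_exp m (by omega)
  have hζ1 : ζ ≠ 1 := hζ.ne_one hm1
  have hζN : ζ ^ N = 1 := (hζ.pow_eq_one_iff_dvd N).mpr (hdvd L)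
  have hζ0 : ζ ≠ 0 := Complex.exp_ne_zero _
  -- total sum is zero
  have total : ∑ x ∈ Finset.range N, ζ ^ x = 0 := by
    rw [geom_sum_eq hζ1, hζN, sub_self, zero_div]
  -- fiberwise decomposition
  let f : ℕ → Fin k := fun x => (hcover x).choose
  have hf1 : ∀ x : ℕ, (n (f x) : ℤ) ∣ (x : ℤ) - a (f x) := fun x => (hcover x).choose_spec.1
  have hf2 : ∀ (x : ℕ) (s : Fin k), (n s : ℤ) ∣ (x : ℤ) - a s → s = f x :=
    fun x s h => (hcover x).choose_spec.2 s h
  have hfib : ∑ s : Fin k, ∑ x ∈ (Finset.range N).filter (fun x => f x = s), ζ ^ x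
      = ∑ x ∈ Finset.range N, ζ ^ x := Finset.sum_fiberwise _ f _
  have hfilter : ∀ s : Fin k, (Finset.range N).filter (fun x => f x = s)
      = (Finset.range N).filter (fun x : ℕ => (n s : ℤ) ∣ (x : ℤ) - a s) := by
    intro s
    ext x
    simp only [mem_filter, mem_range, and_congr_right_iff]
    intro _
    constructor
    · rintro rfl; exact hf1 x
    · intro h; exact (hf2 x s h).symm
  -- class sums
  have class_sum : ∀ s : Fin k,
      ∑ x ∈ (Finset.range N).filter (fun x : ℕ => (n s : ℤ) ∣ (x : ℤ) - a s), ζ ^ x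
      = ζ ^ ((a s % n s).toNat) * ∑ j ∈ Finset.range (N / n s), (ζ ^ n s) ^ j := by
    intro s
    have hd : 0 < n s := by have := h1 s; omega
    rw [aux_filter_eq_image N (n s) hd (hdvd s) (a s)]
    rw [Finset.sum_image (fun j1 _ j2 _ h => by
      have := Nat.add_left_cancel h
      exact Nat.eq_of_mul_eq_mul_right hd this)]
    rw [Finset.mul_sum]
    congr 1
    ext j
    rw [pow_add, mul_comm j (n s), pow_mul]
  -- small classes vanish
  have vanish : ∀ s : Fin k, s ≠ L →
      ∑ x ∈ (Finset.range N).filter (fun x : ℕ => (n s : ℤ) ∣ (x : ℤ) - a s), ζ ^ x = 0 := by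
    intro s hs
    rw [class_sum s]
    have hne1 : ζ ^ n s ≠ 1 := by
      intro heq
      have hdd := (hζ.pow_eq_one_iff_dvd (n s)).mp heq
      have := Nat.le_of_dvd (by have := h1 s; omega) hdd
      have := hsmall s hs
      omega
    have hpow : (ζ ^ n s) ^ (N / n s) = 1 := by
      rw [← pow_mul, Nat.mul_div_cancel' (hdvd s)]
      exact hζN
    rw [geom_sum_eq hne1, hpow, sub_self, zero_div, mul_zero]
  -- the last class gives nonzero sum
  have last_sum : ∑ x ∈ (Finset.range N).filter (fun x : ℕ => (n L : ℤ) ∣ (x : ℤ) - a L), ζ ^ x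
      = ζ ^ ((a L % n L).toNat) * (N / m : ℕ) := by
    rw [class_sum L]
    congr 1
    have : ζ ^ n L = 1 := by rw [← hm]; exact hζ.pow_eq_one
    rw [this]
    simp
    rfl
  have key : (0 : ℂ) = ζ ^ ((a L % n L).toNat) * (N / m : ℕ) := by
    have e1 : ∑ s : Fin k, ∑ x ∈ (Finset.range N).filter (fun x => f x = s), ζ ^ x
        = ζ ^ ((a L % n L).toNat) * (N / m : ℕ) := by
      calc ∑ s : Fin k, ∑ x ∈ (Finset.range N).filter (fun x => f x = s), ζ ^ x
          = ∑ s : Fin k, ∑ x ∈ (Finset.range N).filter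
              (fun x : ℕ => (n s : ℤ) ∣ (x : ℤ) - a s), ζ ^ x :=
            Finset.sum_congr rfl (fun s _ => by rw [hfilter s])
        _ = ∑ x ∈ (Finset.range N).filter (fun x : ℕ => (n L : ℤ) ∣ (x : ℤ) - a L), ζ ^ x :=
            Finset.sum_eq_single_of_mem L (mem_univ L) (fun s _ hs => vanish s hs)
        _ = _ := last_sum
    rw [hfib, total] at e1
    exact e1
  have hNm : 0 < N / m := Nat.div_pos (Nat.le_of_dvd hN0 (hdvd L)) (by omega)
  have : ζ ^ ((a L % n L).toNat) * (N / m : ℕ) ≠ 0 := by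
    apply mul_ne_zero (pow_ne_zero _ hζ0)
    exact_mod_cast hNm.ne'
  exact this key.symm
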